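/- Under the integer encoding, the mixed-integer constraints for conjunction are exact: given integers z_1, …, z_m ∈ {−1, 0, 1}, an integer z, and binary variables b_1, …, b_m ∈ {0,1} with Σ b_j = 1, if z ≤ z_j for all j and z ≥ z_j − 2(1 − b_j) for all j, then z = min_j z_j. Conversely, if z = min_j z_j, then there exist such b_j making all constraints hold. -/
import Mathlib


/-- Exactness of the mixed-integer encoding of ternary conjunction (min). -/
theorem mi_conj_exact (m : ℕ) (hm : 1 ≤ m) (z : Fin m → ℤ)
    (hz : ∀ j, z j = -1 ∨ z j = 0 ∨ z j = 1) (w : ℤ) :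
    ((∀ b : Fin m → ℤ, (∀ j, b j = 0 ∨ b j = 1) → (∑ j, b j) = 1 →
        (∀ j, w ≤ z j) → (∀ j, z j - 2 * (1 - b j) ≤ w) →
        w = Finset.univ.inf' ⟨⟨0, hm⟩, Finset.mem_univ _⟩ z) ∧
     (w = Finset.univ.inf' ⟨⟨0, hm⟩, Finset.mem_univ _⟩ z →
        ∃ b : Fin m → ℤ, (∀ j, b j = 0 ∨ b j = 1) ∧ (∑ j, b j) = 1 ∧
          (∀ j, w ≤ z j) ∧ (∀ j, z j - 2 * (1 - b j) ≤ w))) := by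
  constructor
  · intro b hb hsum hle hge
    have hex : ∃ j, b j = 1 := by
      by_contra h
      push_neg at h
      have h0 : ∀ j, b j = 0 := fun j => (hb j).resolve_right (h j)
      rw [Finset.sum_eq_zero (fun j _ => h0 j)] at hsum
      exact absurd hsum (by norm_num)
    obtain ⟨j₀, hj₀⟩ := hex
    have h1 : z j₀ ≤ w := by have := hge j₀; rw [hj₀] at this; linarith
    have h2 : Finset.univ.inf' ⟨⟨0, hm⟩, Finset.mem_univ _⟩ z ≤ z j₀ :=
      Finset.inf'_le _ (Finset.mem_univ _)
    have h3 : w ≤ Finset.univ.inf' ⟨⟨0, hm⟩, Finset.mem_univ _⟩ z :=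
      Finset.le_inf' _ _ (fun j _ => hle j)
    omega
  · intro hw
    obtain ⟨j₀, -, hj₀⟩ := Finset.exists_mem_eq_inf' ⟨⟨0, hm⟩, Finset.mem_univ (α := Fin m) _⟩ z
    refine ⟨fun j => if j = j₀ then 1 else 0, fun j => by by_cases h : j = j₀ <;> simp [h], ?_, ?_, ?_⟩
    · simp [Finset.sum_ite_eq']
    · intro j
      rw [hw]
      exact Finset.inf'_le _ (Finset.mem_univ _)
    · intro j
      have hwz : w = z j₀ := by rw [hw, hj₀]
      by_cases h : j = j₀
      · subst h; simp [hwz]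
      · simp only [h, if_neg]
        have h1 := hz j
        have h2 := hz j₀
        simp [h]
        omega
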